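/- Let q > 2 be a prime power, let t ∈ 𝔽_q^*, and let f(x) = x^{q−2} + t·x^{q²−q−1}. If f is a permutation polynomial of 𝔽_{q²}, then q is odd. -/

import Mathlib

open Finset

lemma odd_choose_pow_sub_one (m : ℕ) : ∀ k ≤ 2^m - 1, Nat.choose (2^m - 1) k % 2 = 1 := by
  haveI : Fact (Nat.Prime 2) := ⟨Nat.prime_two⟩
  induction m with
  | zero => intro k hk; interval_cases k; simp
  | succ m ih =>
    intro k hk
    have h1 : 1 ≤ 2^m := Nat.one_le_two_pow
    have h2 : (2:ℕ)^(m+1) = 2 * 2^m := by rw [pow_succ]; ring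
    have hmod := Choose.choose_modEq_choose_mod_mul_choose_div_nat
      (n := 2^(m+1)-1) (k := k) (p := 2)
    have hn_mod : (2^(m+1)-1) % 2 = 1 := by omega
    have hn_div : (2^(m+1)-1) / 2 = 2^m - 1 := by omega
    rw [hn_mod, hn_div] at hmod
    have hk2 : Nat.choose 1 (k % 2) = 1 := by
      have : k % 2 = 0 ∨ k % 2 = 1 := by omega
      rcases this with h | h <;> simp [h]
    rw [hk2, one_mul] at hmod
    have hle : k / 2 ≤ 2^m - 1 := by omega
    have := ih (k/2) hle
    unfold Nat.ModEq at hmod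
    omega

lemma odd_choose_main (m : ℕ) (hm : 1 ≤ m) :
    Nat.choose (2*(2^m) - 2) (2^m) % 2 = 1 := by
  haveI : Fact (Nat.Prime 2) := ⟨Nat.prime_two⟩
  obtain ⟨m', rfl⟩ : ∃ m', m = m' + 1 := ⟨m - 1, by omega⟩
  have h1 : 1 ≤ 2^m' := Nat.one_le_two_pow
  have h2 : (2:ℕ)^(m'+1) = 2 * 2^m' := by rw [pow_succ]; ring
  have hmod := Choose.choose_modEq_choose_mod_mul_choose_div_nat
    (n := 2*(2^(m'+1))-2) (k := 2^(m'+1)) (p := 2)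
  have e1 : (2*(2^(m'+1))-2) % 2 = 0 := by omega
  have e2 : (2*(2^(m'+1))-2) / 2 = 2^(m'+1) - 1 := by omega
  have e3 : (2^(m'+1)) % 2 = 0 := by omega
  have e4 : (2^(m'+1)) / 2 = 2^m' := by omega
  rw [e1, e2, e3, e4] at hmod
  simp only [Nat.choose_self, one_mul] at hmod
  have := odd_choose_pow_sub_one (m'+1) (2^m') (by omega)
  unfold Nat.ModEq at hmod
  omega

lemma sq_sub_one' (n : ℕ) (hn : 1 ≤ n) : n^2 - 1 = (n-1)*(n+1) := by
  obtain ⟨r, rfl⟩ : ∃ r, n = r+1 := ⟨n-1, by omega⟩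
  have a : (r+1)^2 = r*r + 2*r + 1 := by ring
  have b : (r+1-1)*(r+1+1) = r*r+2*r := by rw [Nat.add_sub_cancel]; ring
  omega

lemma sum_pow_field (K : Type*) [Field K] [Fintype K] [DecidableEq K] (e : ℕ) (he : e ≠ 0) :
    ∑ x : K, x^e = if (Fintype.card K - 1) ∣ e then (-1:K) else 0 := by
  have h0 : ∑ x : K, x^e = ∑ x : Kˣ, ((x:K))^e := by
    let φ : Kˣ ↪ K := ⟨fun x ↦ x, fun _ _ h => Units.ext h⟩
    have huniv : univ.map φ = univ \ {0} := by
      ext x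
      simpa only [mem_map, mem_univ, Function.Embedding.coeFn_mk, true_and, mem_sdiff,
        mem_singleton, φ] using (show (∃ a : Kˣ, φ a = x) ↔ ¬x = 0 from isUnit_iff_ne_zero)
    calc
      ∑ x : K, x ^ e = ∑ x ∈ univ \ {(0 : K)}, x ^ e := by
        rw [← sum_sdiff ({0} : Finset K).subset_univ, sum_singleton, zero_pow he, add_zero]
      _ = ∑ x : Kˣ, (x ^ e : K) := by simp [φ, ← huniv, univ.sum_map φ]; rfl
  rw [h0, FiniteField.sum_pow_units]

/-- Let `q > 2` be a prime power, `t ∈ 𝔽_q^*`, and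
`f(x) = x^(q-2) + t·x^(q²-q-1)`. If `f` is a permutation polynomial of `𝔽_{q²}`,
then `q` is odd. -/
theorem stmt_17 (p m q : ℕ) (hp : p.Prime) (hq : q = p ^ m) (hq2 : 2 < q)
    (K : Type) [Field K] [Fintype K] (hK : Fintype.card K = q ^ 2)
    (t : K) (ht0 : t ≠ 0) (htq : t ^ q = t)
    (hbij : Function.Bijective (fun x : K => x ^ (q - 2) + t * x ^ (q ^ 2 - q - 1))) :
    Odd q := by
  classical
  by_contra hodd
  rw [Nat.not_odd_iff_even] at hodd
  have hp2 : p = 2 := by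
    have h2q : 2 ∣ q := hodd.two_dvd
    rw [hq] at h2q
    have h2p := Nat.Prime.dvd_of_dvd_pow Nat.prime_two h2q
    exact ((Nat.prime_dvd_prime_iff_eq Nat.prime_two hp).mp h2p).symm
  subst hp2
  have hm1 : 1 ≤ m := by
    rcases Nat.eq_zero_or_pos m with h | h
    · subst h; simp at hq; omega
    · exact h
  have hq3 : 3 ≤ q := hq2
  have hqq : q + 1 < q^2 := by nlinarith
  -- characteristic 2
  have h2K : (2:K) = 0 := by
    have hcard := FiniteField.cast_card_eq_zero K
    rw [hK, hq] at hcard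
    push_cast at hcard
    have h20 : ((2:K))^(m*2) = 0 := by rw [pow_mul]; exact_mod_cast hcard
    exact pow_eq_zero_iff (by omega : m*2 ≠ 0) |>.mp h20
  -- square root of t
  set τ : K := t^(2^(m-1)) with hτdef
  have hmm : 2^(m-1)*2 = q := by
    rw [hq, ← pow_succ]
    congr 1
    omega
  have hτ2 : τ^2 = t := by rw [hτdef, ← pow_mul, hmm]; exact htq
  have hτ0 : τ ≠ 0 := pow_ne_zero _ ht0
  -- pointwise key identity
  have key : ∀ x : K, (x^(q-2) + t * x^(q^2-q-1))^(q-1)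
      = x^(q-1) * (x^(q-1)+τ)^(2*(q-1)) := by
    intro x
    by_cases hx : x = 0
    · subst hx
      rw [zero_pow (by omega : q - 2 ≠ 0), zero_pow (show q^2-q-1 ≠ 0 by omega),
        mul_zero, add_zero, zero_pow (by omega : q-1 ≠ 0), zero_mul]
    · have hx1 : x^(q^2-1) = 1 := by
        have := FiniteField.pow_card_sub_one_eq_one x hx
        rwa [hK] at this
      have hA : x^q * (x^(q-2) + t * x^(q^2-q-1)) = (x^(q-1)+τ)^2 := by
        have e1 : x^q * x^(q-2) = x^(2*(q-1)) := by rw [← pow_add]; congr 1; omega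
        have e2 : x^q * x^(q^2-q-1) = 1 := by
          rw [← pow_add, show q + (q^2-q-1) = q^2 - 1 by omega]
          exact hx1
        have e3 : (x^(q-1)+τ)^2 = x^(q-1)*x^(q-1) + τ^2 + 2*(x^(q-1)*τ) := by ring
        calc x^q * (x^(q-2) + t * x^(q^2-q-1))
            = x^q * x^(q-2) + t * (x^q * x^(q^2-q-1)) := by ring
          _ = x^(2*(q-1)) + t := by rw [e1, e2, mul_one]
          _ = (x^(q-1)+τ)^2 := by
              rw [e3, h2K, hτ2, ← pow_add, show (q-1)+(q-1) = 2*(q-1) by omega]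
              ring
      have hB : x^(q*(q-1)) * (x^(q-2)+t*x^(q^2-q-1))^(q-1) = (x^(q-1)+τ)^(2*(q-1)) := by
        have hc := congrArg (· ^ (q-1)) hA
        simp only [mul_pow, ← pow_mul] at hc
        exact hc
      have hxq : x^(q-1) * x^(q*(q-1)) = 1 := by
        rw [← pow_add]
        have e : (q-1) + q*(q-1) = (q-1)*(q+1) := by ring
        rw [e, ← sq_sub_one' q (by omega)]
        exact hx1
      calc (x^(q-2)+t*x^(q^2-q-1))^(q-1)
          = (x^(q-1) * x^(q*(q-1))) * (x^(q-2)+t*x^(q^2-q-1))^(q-1) := by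
            rw [hxq, one_mul]
        _ = x^(q-1) * (x^(q*(q-1)) * (x^(q-2)+t*x^(q^2-q-1))^(q-1)) := by ring
        _ = x^(q-1) * (x^(q-1)+τ)^(2*(q-1)) := by rw [hB]
  -- the power sum is zero by bijectivity
  have hzero : ∑ x : K, (x ^ (q - 2) + t * x ^ (q ^ 2 - q - 1))^(q-1) = 0 := by
    have h1 := hbij.sum_comp (fun y : K => y^(q-1))
    rw [h1]
    apply FiniteField.sum_pow_lt_card_sub_one
    rw [hK]; omega
  have hS : ∑ x : K, x^(q-1) * (x^(q-1)+τ)^(2*(q-1)) = 0 := by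
    rw [← hzero]
    exact Finset.sum_congr rfl fun x _ => (key x).symm
  -- expand and compute
  have hexp : ∑ x : K, x^(q-1) * (x^(q-1)+τ)^(2*(q-1))
      = ∑ j ∈ range (2*(q-1)+1),
          (if (q^2-1) ∣ (q-1)*(j+1) then (-1:K) else 0)
            * (τ^(2*(q-1)-j) * ((2*(q-1)).choose j : K)) := by
    have step1 : ∀ x : K, x^(q-1) * (x^(q-1)+τ)^(2*(q-1))
        = ∑ j ∈ range (2*(q-1)+1),
            x^((q-1)*(j+1)) * (τ^(2*(q-1)-j) * ((2*(q-1)).choose j : K)) := by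
      intro x
      rw [add_pow, Finset.mul_sum]
      refine Finset.sum_congr rfl fun j hj => ?_
      calc x^(q-1) * ((x^(q-1))^j * τ^(2*(q-1)-j) * ((2*(q-1)).choose j : K))
          = (x^(q-1) * (x^(q-1))^j) * (τ^(2*(q-1)-j) * ((2*(q-1)).choose j : K)) := by
            ring
        _ = x^((q-1)*(j+1)) * (τ^(2*(q-1)-j) * ((2*(q-1)).choose j : K)) := by
            rw [← pow_mul, ← pow_add]
            congr 2
            ring
    rw [Finset.sum_congr rfl fun x _ => step1 x, Finset.sum_comm]
    refine Finset.sum_congr rfl fun j hj => ?_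
    rw [← Finset.sum_mul]
    congr 1
    have hne : (q-1)*(j+1) ≠ 0 := Nat.mul_ne_zero (by omega) (by omega)
    rw [sum_pow_field K _ hne, hK]
  rw [hexp] at hS
  -- only j = q contributes
  have hfac : q^2 - 1 = (q-1)*(q+1) := sq_sub_one' q (by omega)
  have hcond : ∀ j ∈ range (2*(q-1)+1), ((q^2-1) ∣ (q-1)*(j+1)) ↔ j = q := by
    intro j hj
    rw [Finset.mem_range] at hj
    rw [hfac, Nat.mul_dvd_mul_iff_left (show 0 < q-1 by omega)]
    constructor
    · rintro ⟨k, hk⟩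
      match k with
      | 0 => omega
      | 1 => omega
      | k+2 =>
        have h2 : (q+1)*(k+2) ≥ (q+1)*2 := Nat.mul_le_mul_left _ (by omega)
        omega
    · rintro rfl
      exact ⟨1, by ring⟩
  rw [Finset.sum_eq_single_of_mem q (Finset.mem_range.mpr (by omega))
    (fun j hj hne => by rw [if_neg (fun hd => hne ((hcond j hj).mp hd)), zero_mul])] at hS
  rw [if_pos ((hcond q (Finset.mem_range.mpr (by omega))).mpr rfl)] at hS
  rw [neg_one_mul, neg_eq_zero] at hS
  -- the binomial coefficient is odd, hence equals 1 in K
  have hC1 : (((2*(q-1)).choose q : ℕ) : K) = 1 := by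
    have he : 2*(q-1) = 2*2^m - 2 := by omega
    rw [he, hq]
    have hodd2 := odd_choose_main m hm1
    set c := (2*2^m - 2).choose (2^m) with hc
    have hc2 : c = 2*(c/2) + 1 := by omega
    rw [hc2]
    push_cast
    rw [h2K]
    ring
  rw [hC1, mul_one] at hS
  have hτz : τ = 0 := pow_eq_zero_iff (show 2*(q-1)-q ≠ 0 by omega) |>.mp hS
  exact hτ0 hτz
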